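/- Suppose a nonnegative C¹ function v : [0, s] → ℝ satisfies v' ≤ C₁ v + C₂ √v + C₃ with v(0) = A₀ ≥ 0, where C₁ ≥ 0 and C₂, C₃ > 0. Then v(t) ≤ e^{C₁ s}[(2C₂ s + √(A₀ + C₃²/C₂²))² − C₃²/C₂²] for all t ∈ [0, s]. -/

import Mathlib

open Real

/-- Self-bounding ODE estimate: if a nonnegative `C¹` function `v` on `[0,s]` satisfies
`v' ≤ C₁ v + C₂ √v + C₃` with `v(0) = A₀ ≥ 0`, then
`v(t) ≤ e^{C₁ s} [(2C₂ s + √(A₀ + C₃²/C₂²))² − C₃²/C₂²]` on `[0,s]`. -/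
theorem self_bounding_ode (s C₁ C₂ C₃ A₀ : ℝ)
    (hs : 0 < s) (hC₁ : 0 ≤ C₁) (hC₂ : 0 < C₂) (hC₃ : 0 < C₃) (hA₀ : 0 ≤ A₀)
    (v v' : ℝ → ℝ)
    (hv0 : v 0 = A₀)
    (hnonneg : ∀ t ∈ Set.Icc (0 : ℝ) s, 0 ≤ v t)
    (hderiv : ∀ t ∈ Set.Icc (0 : ℝ) s, HasDerivAt v (v' t) t)
    (hcont : ContinuousOn v' (Set.Icc 0 s))
    (hineq : ∀ t ∈ Set.Icc (0 : ℝ) s, v' t ≤ C₁ * v t + C₂ * Real.sqrt (v t) + C₃) :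
    ∀ t ∈ Set.Icc (0 : ℝ) s,
      v t ≤ Real.exp (C₁ * s) *
        ((2 * C₂ * s + Real.sqrt (A₀ + C₃ ^ 2 / C₂ ^ 2)) ^ 2 - C₃ ^ 2 / C₂ ^ 2) := by
  set K : ℝ := C₃ ^ 2 / C₂ ^ 2 with hKdef
  have hK : 0 < K := by positivity
  set u : ℝ → ℝ := fun t => Real.exp (-C₁ * t) * v t + K with hu_def
  set g : ℝ → ℝ := fun t => Real.sqrt (u t) with hg_def
  have hupos : ∀ t ∈ Set.Icc (0 : ℝ) s, 0 < u t := by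
    intro t ht
    have h1 := hnonneg t ht
    have h2 : 0 ≤ Real.exp (-C₁ * t) * v t := mul_nonneg (Real.exp_pos _).le h1
    simp only [hu_def]; linarith
  have hgpos : ∀ t ∈ Set.Icc (0 : ℝ) s, 0 < g t := fun t ht =>
    Real.sqrt_pos.2 (hupos t ht)
  set u' : ℝ → ℝ := fun t => -C₁ * Real.exp (-C₁ * t) * v t + Real.exp (-C₁ * t) * v' t
    with hu'_def
  have hdu : ∀ t ∈ Set.Icc (0 : ℝ) s, HasDerivAt u (u' t) t := by
    intro t ht
    have he : HasDerivAt (fun x => Real.exp (-C₁ * x)) (Real.exp (-C₁ * t) * -C₁) t := by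
      simpa using ((hasDerivAt_id t).const_mul (-C₁)).exp
    have h := (he.mul (hderiv t ht)).add_const K
    exact h.congr_deriv (by simp only [hu'_def]; ring)
  have hdg : ∀ t ∈ Set.Icc (0 : ℝ) s, HasDerivAt g (u' t / (2 * g t)) t := by
    intro t ht
    have hne : u t ≠ 0 := (hupos t ht).ne'
    have h := (Real.hasDerivAt_sqrt hne).comp t (hdu t ht)
    exact h.congr_deriv (by simp only [hg_def]; field_simp)
  have hsqrtK : Real.sqrt K = C₃ / C₂ := by
    have h : K = (C₃ / C₂) ^ 2 := by rw [hKdef, div_pow]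
    rw [h, Real.sqrt_sq (by positivity)]
  -- key bound: u' t ≤ 2 C₂ g t
  have hkey : ∀ t ∈ Set.Icc (0 : ℝ) s, u' t ≤ 2 * C₂ * g t := by
    intro t ht
    have ht0 : 0 ≤ t := ht.1
    set e : ℝ := Real.exp (-C₁ * t) with he_def
    have he0 : 0 < e := Real.exp_pos _
    have he1 : e ≤ 1 := Real.exp_le_one_iff.2 (by nlinarith)
    have hvnn := hnonneg t ht
    have h1 : u' t ≤ e * (C₂ * Real.sqrt (v t)) + e * C₃ := by
      have := hineq t ht
      simp only [hu'_def]
      nlinarith [mul_le_mul_of_nonneg_left this he0.le]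
    have h2 : e * Real.sqrt (v t) ≤ g t := by
      have : e * Real.sqrt (v t) = Real.sqrt (e ^ 2 * v t) := by
        rw [Real.sqrt_mul (by positivity), Real.sqrt_sq he0.le]
      rw [this, hg_def]
      apply Real.sqrt_le_sqrt
      simp only [hu_def]
      rw [← he_def]
      nlinarith [mul_le_mul_of_nonneg_right he1 (mul_nonneg he0.le hvnn)]
    have h3 : e * C₃ ≤ C₂ * g t := by
      have hKg : Real.sqrt K ≤ g t := by
        apply Real.sqrt_le_sqrt
        simp only [hu_def]
        rw [← he_def]
        nlinarith
      calc e * C₃ ≤ 1 * C₃ := by nlinarith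
        _ = C₂ * Real.sqrt K := by rw [hsqrtK]; field_simp
        _ ≤ C₂ * g t := by nlinarith
    nlinarith
  -- derivative bound: g' ≤ C₂ on interior
  have hgder : ∀ t ∈ Set.Icc (0 : ℝ) s, deriv g t ≤ C₂ := by
    intro t ht
    rw [(hdg t ht).deriv]
    rw [div_le_iff₀ (by linarith [hgpos t ht] : (0:ℝ) < 2 * g t)]
    calc u' t ≤ 2 * C₂ * g t := hkey t ht
      _ = C₂ * (2 * g t) := by ring
  -- continuity of g on Icc
  have hgc : ContinuousOn g (Set.Icc 0 s) := fun t ht =>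
    ((hdg t ht).continuousAt).continuousWithinAt
  have hgd : DifferentiableOn ℝ g (interior (Set.Icc (0:ℝ) s)) := by
    intro t ht
    exact ((hdg t (interior_subset ht)).differentiableAt).differentiableWithinAt
  -- MVT
  intro t ht
  have hmvt : g t - g 0 ≤ C₂ * (t - 0) := by
    apply (convex_Icc (0:ℝ) s).image_sub_le_mul_sub_of_deriv_le hgc hgd
      (fun x hx => hgder x (interior_subset hx)) 0 (Set.left_mem_Icc.2 hs.le) t ht ht.1
  have hg0 : g 0 = Real.sqrt (A₀ + K) := by
    simp [hg_def, hu_def, hv0]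
  set B : ℝ := 2 * C₂ * s + Real.sqrt (A₀ + K) with hB_def
  have hBnn : 0 ≤ B := by positivity
  have hgB : g t ≤ B := by
    have ht1 : t ≤ s := ht.2
    have : Real.sqrt (A₀ + K) ≤ B := by nlinarith [Real.sqrt_nonneg (A₀ + K)]
    nlinarith [hmvt, hg0, ht.1]
  have huB : u t ≤ B ^ 2 := by
    have h1 : u t = g t ^ 2 := (Real.sq_sqrt (hupos t ht).le).symm
    rw [h1]
    nlinarith [hgpos t ht]
  have hKB : A₀ + K ≤ B ^ 2 := by
    have hsB : Real.sqrt (A₀ + K) ≤ B := by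
      simp only [hB_def]; nlinarith
    calc A₀ + K = Real.sqrt (A₀ + K) ^ 2 := (Real.sq_sqrt (by positivity)).symm
      _ ≤ B ^ 2 := pow_le_pow_left₀ (Real.sqrt_nonneg _) hsB 2
  have hvt : v t ≤ Real.exp (C₁ * t) * (B ^ 2 - K) := by
    have h1 : Real.exp (-C₁ * t) * v t ≤ B ^ 2 - K := by
      simp only [hu_def] at huB; linarith
    have h2 : Real.exp (C₁ * t) * (Real.exp (-C₁ * t) * v t) = v t := by
      rw [← mul_assoc, ← Real.exp_add]; simp
    calc v t = Real.exp (C₁ * t) * (Real.exp (-C₁ * t) * v t) := h2.symm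
      _ ≤ Real.exp (C₁ * t) * (B ^ 2 - K) :=
          mul_le_mul_of_nonneg_left h1 (Real.exp_pos (C₁ * t)).le
  calc v t ≤ Real.exp (C₁ * t) * (B ^ 2 - K) := hvt
    _ ≤ Real.exp (C₁ * s) * (B ^ 2 - K) := by
        have hle : Real.exp (C₁ * t) ≤ Real.exp (C₁ * s) :=
          Real.exp_le_exp.2 (mul_le_mul_of_nonneg_left ht.2 hC₁)
        exact mul_le_mul_of_nonneg_right hle (by linarith)
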